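/- Let B, J be real numbers with 0 < B < 2J and let H be the 8×8 Hermitian matrix on (ℂ²)⊗(ℂ²)⊗(ℂ²) given by H = (B/2)(σ_z⊗I⊗I + I⊗σ_z⊗I + I⊗I⊗σ_z) + J(σ_x⊗σ_x⊗I + σ_y⊗σ_y⊗I + I⊗σ_x⊗σ_x + I⊗σ_y⊗σ_y + σ_x⊗I⊗σ_x + σ_y⊗I⊗σ_y). Then the smallest eigenvalue of H is −2J − B/2, and its eigenspace is two-dimensional. -/
import Mathlib


open scoped Matrix Kronecker
open Module

/-- The Pauli matrix `σ_x`. -/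
noncomputable def σx : Matrix (Fin 2) (Fin 2) ℂ := !![0, 1; 1, 0]
/-- The Pauli matrix `σ_y`. -/
noncomputable def σy : Matrix (Fin 2) (Fin 2) ℂ := !![0, -Complex.I; Complex.I, 0]
/-- The Pauli matrix `σ_z`. -/
noncomputable def σz : Matrix (Fin 2) (Fin 2) ℂ := !![1, 0; 0, -1]

/-- The Hamiltonian of the isotropic XX model of three qubits on a ring in a constant
magnetic field `B` with coupling `J`:
`H = (B/2) ∑ᵢ σᵢᶻ + J ∑ᵢ (σᵢˣ σᵢ₊₁ˣ + σᵢʸ σᵢ₊₁ʸ)` with periodic boundary conditions. -/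
noncomputable def XXHamiltonian (B J : ℝ) :
    Matrix (Fin 2 × Fin 2 × Fin 2) (Fin 2 × Fin 2 × Fin 2) ℂ :=
  ((B / 2 : ℝ) : ℂ) • (σz ⊗ₖ (1 ⊗ₖ 1) + 1 ⊗ₖ (σz ⊗ₖ 1) + 1 ⊗ₖ (1 ⊗ₖ σz)) +
  (J : ℂ) • (σx ⊗ₖ (σx ⊗ₖ 1) + σy ⊗ₖ (σy ⊗ₖ 1) + 1 ⊗ₖ (σx ⊗ₖ σx) + 1 ⊗ₖ (σy ⊗ₖ σy) +
    σx ⊗ₖ (1 ⊗ₖ σx) + σy ⊗ₖ (1 ⊗ₖ σy))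


/-! ### Auxiliary setup: explicit diagonalization of the Hamiltonian -/

abbrev Idx := Fin 2 × Fin 2 × Fin 2

noncomputable def PM : Matrix Idx Idx ℂ := Matrix.of fun p q =>
  ![![![![![![1, 0], ![0, 0]], ![![0, 0], ![0, 0]]], ![![![0, 1], ![1, 0]], ![![1, 0], ![0, 0]]]], ![![![![0, 1], ![-1, 0]], ![![0, 0], ![0, 0]]], ![![![0, 0], ![0, 1]], ![![0, 1], ![1, 0]]]]], ![![![![![0, 1], ![0, 0]], ![![-1, 0], ![0, 0]]], ![![![0, 0], ![0, 1]], ![![0, -1], ![0, 0]]]], ![![![![0, 0], ![0, 1]], ![![0, 0], ![-1, 0]]], ![![![0, 0], ![0, 0]], ![![0, 0], ![0, 1]]]]]] p.1 p.2.1 p.2.2 q.1 q.2.1 q.2.2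

noncomputable def QM : Matrix Idx Idx ℂ := Matrix.of fun p q =>
  ![![![![![![(1), (0)], ![(0), (0)]], ![![(0), (0)], ![(0), (0)]]], ![![![(0), (1/3)], ![(1/3), (0)]], ![![(1/3), (0)], ![(0), (0)]]]], ![![![![(0), (1/3)], ![(-2/3), (0)]], ![![(1/3), (0)], ![(0), (0)]]], ![![![(0), (0)], ![(0), (1/3)]], ![![(0), (1/3)], ![(1/3), (0)]]]]], ![![![![![(0), (1/3)], ![(1/3), (0)]], ![![(-2/3), (0)], ![(0), (0)]]], ![![![(0), (0)], ![(0), (1/3)]], ![![(0), (-2/3)], ![(1/3), (0)]]]], ![![![![(0), (0)], ![(0), (1/3)]], ![![(0), (1/3)], ![(-2/3), (0)]]], ![![![(0), (0)], ![(0), (0)]], ![![(0), (0)], ![(0), (1)]]]]]] p.1 p.2.1 p.2.2 q.1 q.2.1 q.2.2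

noncomputable def HM (B J : ℝ) : Matrix Idx Idx ℂ := Matrix.of fun p q =>
  ![![![![![![(3*(B:ℂ)/2), (0)], ![(0), (0)]], ![![(0), (0)], ![(0), (0)]]], ![![![(0), ((B:ℂ)/2)], ![(2*(J:ℂ)), (0)]], ![![(2*(J:ℂ)), (0)], ![(0), (0)]]]], ![![![![(0), (2*(J:ℂ))], ![((B:ℂ)/2), (0)]], ![![(2*(J:ℂ)), (0)], ![(0), (0)]]], ![![![(0), (0)], ![(0), (-(B:ℂ)/2)]], ![![(0), (2*(J:ℂ))], ![(2*(J:ℂ)), (0)]]]]], ![![![![![(0), (2*(J:ℂ))], ![(2*(J:ℂ)), (0)]], ![![((B:ℂ)/2), (0)], ![(0), (0)]]], ![![![(0), (0)], ![(0), (2*(J:ℂ))]], ![![(0), (-(B:ℂ)/2)], ![(2*(J:ℂ)), (0)]]]], ![![![![(0), (0)], ![(0), (2*(J:ℂ))]], ![![(0), (2*(J:ℂ))], ![(-(B:ℂ)/2), (0)]]], ![![![(0), (0)], ![(0), (0)]], ![![(0), (0)], ![(0), (-3*(B:ℂ)/2)]]]]]] p.1 p.2.1 p.2.2 q.1 q.2.1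 q.2.2

noncomputable def dR (B J : ℝ) : Idx → ℝ := fun p =>
  ![![![(3*B/2), (B/2+4*J)], ![(B/2-2*J), (-B/2+4*J)]], ![![(B/2-2*J), (-B/2-2*J)], ![(-B/2-2*J), (-3*B/2)]]] p.1 p.2.1 p.2.2
noncomputable def dC (B J : ℝ) : Idx → ℂ := fun p =>
  ![![![(3*(B:ℂ)/2), ((B:ℂ)/2+4*(J:ℂ))], ![((B:ℂ)/2-2*(J:ℂ)), (-(B:ℂ)/2+4*(J:ℂ))]], ![![((B:ℂ)/2-2*(J:ℂ)), (-(B:ℂ)/2-2*(J:ℂ))], ![(-(B:ℂ)/2-2*(J:ℂ)), (-3*(B:ℂ)/2)]]] p.1 p.2.1 p.2.2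

noncomputable def DM (B J : ℝ) : Matrix Idx Idx ℂ := Matrix.diagonal (dC B J)

lemma sumIdx (f : Idx → ℂ) : ∑ p, f p = f (0,0,0) + f (0,0,1) + f (0,1,0) + f (0,1,1)
    + f (1,0,0) + f (1,0,1) + f (1,1,0) + f (1,1,1) := by
  rw [Fintype.sum_prod_type]
  simp only [Fintype.sum_prod_type, Fin.sum_univ_two]
  ring

set_option maxHeartbeats 2000000 in
lemma hPQ : PM * QM = 1 := by
  ext ⟨a,b,c⟩ ⟨a',b',c'⟩
  fin_cases a <;> fin_cases b <;> fin_cases c <;> fin_cases a' <;> fin_cases b' <;> fin_cases c' <;>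
  · rw [Matrix.mul_apply, sumIdx]
    simp only [PM, QM, Matrix.of_apply, Matrix.one_apply,
      Matrix.cons_val_zero, Matrix.cons_val_one, Matrix.head_cons,
      Fin.mk_zero, Fin.mk_one, Fin.isValue, Prod.mk.injEq]
    norm_num

set_option maxHeartbeats 2000000 in
lemma hQP : QM * PM = 1 := by
  ext ⟨a,b,c⟩ ⟨a',b',c'⟩
  fin_cases a <;> fin_cases b <;> fin_cases c <;> fin_cases a' <;> fin_cases b' <;> fin_cases c' <;>
  · rw [Matrix.mul_apply, sumIdx]
    simp only [PM, QM, Matrix.of_apply, Matrix.one_apply,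
      Matrix.cons_val_zero, Matrix.cons_val_one, Matrix.head_cons,
      Fin.mk_zero, Fin.mk_one, Fin.isValue, Prod.mk.injEq]
    norm_num

set_option maxHeartbeats 2000000 in
lemma hHM (B J : ℝ) : XXHamiltonian B J = HM B J := by
  ext ⟨a,b,c⟩ ⟨a',b',c'⟩
  fin_cases a <;> fin_cases b <;> fin_cases c <;> fin_cases a' <;> fin_cases b' <;> fin_cases c' <;>
  · simp only [XXHamiltonian, HM, σx, σy, σz, Matrix.of_apply, Matrix.kroneckerMap_apply,
      Matrix.add_apply, Matrix.smul_apply, Matrix.one_apply, Matrix.cons_val_zero,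
      Matrix.cons_val_one, Matrix.head_cons, Fin.mk_zero, Fin.mk_one, Fin.isValue,
      Prod.mk.injEq, smul_eq_mul]
    norm_num [Complex.ext_iff] <;> ring

set_option maxHeartbeats 2000000 in
lemma hPDQ (B J : ℝ) : HM B J = PM * DM B J * QM := by
  rw [Matrix.mul_assoc]
  ext ⟨a,b,c⟩ ⟨a',b',c'⟩
  fin_cases a <;> fin_cases b <;> fin_cases c <;> fin_cases a' <;> fin_cases b' <;> fin_cases c' <;>
  · rw [Matrix.mul_apply, sumIdx]
    simp only [HM, PM, QM, DM, dC, Matrix.of_apply, Matrix.diagonal_mul,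
      Matrix.cons_val_zero, Matrix.cons_val_one, Matrix.head_cons,
      Fin.mk_zero, Fin.mk_one, Fin.isValue]
    ring

lemma hH (B J : ℝ) : XXHamiltonian B J = PM * DM B J * QM := (hHM B J).trans (hPDQ B J)

/-- The real eigenvalue list. -/
noncomputable def dRl (B J : ℝ) : Idx → ℝ := fun p =>
  ![![![3*B/2, B/2+4*J], ![B/2-2*J, -B/2+4*J]], ![![B/2-2*J, -B/2-2*J], ![-B/2-2*J, -3*B/2]]]
    p.1 p.2.1 p.2.2

lemma dC_eq (B J : ℝ) (p : Idx) : dC B J p = ((dRl B J p : ℝ) : ℂ) := by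
  obtain ⟨a,b,c⟩ := p
  fin_cases a <;> fin_cases b <;> fin_cases c <;>
  · simp only [dC, dRl, Matrix.cons_val_zero, Matrix.cons_val_one, Matrix.head_cons,
      Fin.mk_zero, Fin.mk_one, Fin.isValue]
    push_cast
    ring

/-- The basis-change linear equivalence. -/
noncomputable def eqv : (Idx → ℂ) ≃ₗ[ℂ] (Idx → ℂ) :=
  LinearEquiv.ofLinear PM.mulVecLin QM.mulVecLin
    (by rw [← Matrix.mulVecLin_mul, hPQ, Matrix.mulVecLin_one])
    (by rw [← Matrix.mulVecLin_mul, hQP, Matrix.mulVecLin_one])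

lemma eig_eq (B J : ℝ) (μ : ℂ) :
    Module.End.eigenspace (XXHamiltonian B J).mulVecLin μ
      = (Module.End.eigenspace (DM B J).mulVecLin μ).map
          (eqv : (Idx → ℂ) →ₗ[ℂ] (Idx → ℂ)) := by
  have key : (DM B J).mulVecLin ∘ₗ QM.mulVecLin
      = QM.mulVecLin ∘ₗ (XXHamiltonian B J).mulVecLin := by
    rw [hH, ← Matrix.mulVecLin_mul, ← Matrix.mulVecLin_mul]
    congr 1
    rw [← Matrix.mul_assoc, ← Matrix.mul_assoc, hQP, Matrix.one_mul]
  have hPQv : ∀ w : Idx → ℂ, PM.mulVecLin (QM.mulVecLin w) = w := fun w => by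
    rw [← LinearMap.comp_apply, ← Matrix.mulVecLin_mul, hPQ, Matrix.mulVecLin_one,
      LinearMap.id_apply]
  ext v
  rw [Submodule.mem_map_equiv, Module.End.mem_eigenspace_iff, Module.End.mem_eigenspace_iff]
  have hsymm : eqv.symm v = QM.mulVecLin v := rfl
  have happ : ∀ w : Idx → ℂ, eqv w = PM.mulVecLin w := fun _ => rfl
  rw [hsymm]
  constructor
  · intro h
    have h1 : (DM B J).mulVecLin (QM.mulVecLin v)
        = QM.mulVecLin ((XXHamiltonian B J).mulVecLin v) := LinearMap.congr_fun key v
    rw [h, map_smul] at h1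
    exact h1
  · intro h
    have h2 := congrArg PM.mulVecLin h
    rw [map_smul, hPQv] at h2
    have h3 : (XXHamiltonian B J).mulVecLin v
        = PM.mulVecLin ((DM B J).mulVecLin (QM.mulVecLin v)) := by
      rw [hH]
      simp only [Matrix.mulVecLin_mul, LinearMap.comp_apply]
    rw [h3, h2]

lemma map_bot_iff (S : Submodule ℂ (Idx → ℂ)) :
    S.map (eqv : (Idx → ℂ) →ₗ[ℂ] (Idx → ℂ)) = ⊥ ↔ S = ⊥ := by
  constructor
  · intro h
    rw [eq_bot_iff]
    intro x hx
    have hm : eqv x ∈ S.map (eqv : (Idx → ℂ) →ₗ[ℂ] (Idx → ℂ)) := Submodule.mem_map_of_mem hx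
    rw [h, Submodule.mem_bot] at hm
    rw [Submodule.mem_bot]
    exact eqv.injective (by simpa using hm)
  · rintro rfl
    exact Submodule.map_bot _

lemma hasEig_iff (B J : ℝ) (μ : ℂ) :
    Module.End.HasEigenvalue (XXHamiltonian B J).mulVecLin μ
      ↔ Module.End.HasEigenvalue (DM B J).mulVecLin μ := by
  rw [Module.End.hasEigenvalue_iff, Module.End.hasEigenvalue_iff, eig_eq, not_iff_not,
    map_bot_iff]

lemma diag_eigen {w : Idx → ℂ} {μ : ℂ}
    (h : Module.End.HasEigenvalue (Matrix.diagonal w).mulVecLin μ) : ∃ i, w i = μ := by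
  obtain ⟨v, hv⟩ := h.exists_hasEigenvector
  have hm := Module.End.mem_eigenspace_iff.mp hv.1
  obtain ⟨i, hi⟩ := Function.ne_iff.mp hv.2
  have hi' := congrFun hm i
  rw [Matrix.mulVecLin_apply, Matrix.mulVec_diagonal] at hi'
  exact ⟨i, mul_right_cancel₀ hi (by simpa using hi')⟩

lemma single_mem {w : Idx → ℂ} {μ : ℂ} {i : Idx} (hi : w i = μ) :
    Pi.single i (1 : ℂ) ∈ Module.End.eigenspace (Matrix.diagonal w).mulVecLin μ := by
  rw [Module.End.mem_eigenspace_iff]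
  funext q
  rw [Matrix.mulVecLin_apply, Matrix.mulVec_diagonal]
  rcases eq_or_ne q i with rfl | h
  · simp [hi]
  · simp [Pi.single_apply, h]

lemma DM_eq (B J : ℝ) : DM B J = Matrix.diagonal (dC B J) := rfl

lemma dC5 (B J : ℝ) : dC B J (1,0,1) = ((-(2 * J) - B / 2 : ℝ) : ℂ) := by
  rw [dC_eq]
  refine Complex.ofReal_inj.mpr ?_
  simp only [dRl, Matrix.cons_val_zero, Matrix.cons_val_one, Matrix.head_cons]
  ring

lemma dC6 (B J : ℝ) : dC B J (1,1,0) = ((-(2 * J) - B / 2 : ℝ) : ℂ) := by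
  rw [dC_eq]
  refine Complex.ofReal_inj.mpr ?_
  simp only [dRl, Matrix.cons_val_zero, Matrix.cons_val_one, Matrix.head_cons]
  ring

noncomputable def s5 : Idx → ℂ := Pi.single (1,0,1) 1
noncomputable def s6 : Idx → ℂ := Pi.single (1,1,0) 1

lemma single5_ne : s5 ≠ 0 := by
  intro h
  have := congrFun h (1,0,1)
  simp [s5, Pi.single_eq_same] at this

lemma eigsp (B J : ℝ) (hB : 0 < B) (hBJ : B < 2 * J) :
    Module.End.eigenspace (DM B J).mulVecLin ((-(2 * J) - B / 2 : ℝ) : ℂ)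
      = Submodule.span ℂ {s5, s6} := by
  have hJ : 0 < J := by linarith
  have hne : ∀ q : Idx, q ≠ (1,0,1) → q ≠ (1,1,0) →
      dC B J q ≠ ((-(2 * J) - B / 2 : ℝ) : ℂ) := by
    intro q h1 h2
    rw [dC_eq, Ne, Complex.ofReal_inj]
    fin_cases q <;>
      first
        | exact absurd rfl h1
        | exact absurd rfl h2
        | (simp only [dRl, Matrix.cons_val_zero, Matrix.cons_val_one, Matrix.head_cons,
            Fin.mk_zero, Fin.mk_one, Fin.isValue]
           intro h
           linarith)
  apply le_antisymm
  · intro v hv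
    rw [Module.End.mem_eigenspace_iff] at hv
    have hq : ∀ q, dC B J q * v q = ((-(2 * J) - B / 2 : ℝ) : ℂ) * v q := by
      intro q
      have := congrFun hv q
      rw [Matrix.mulVecLin_apply, DM_eq, Matrix.mulVec_diagonal] at this
      simpa using this
    have hz : ∀ q, q ≠ (1,0,1) → q ≠ (1,1,0) → v q = 0 := by
      intro q h1 h2
      by_contra h0
      exact hne q h1 h2 (mul_right_cancel₀ h0 (hq q))
    have hrep : v = v (1,0,1) • s5 + v (1,1,0) • s6 := by
      funext q
      rcases eq_or_ne q (1,0,1) with rfl | hq1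
      · simp [s5, s6, Pi.single_apply]
      rcases eq_or_ne q (1,1,0) with rfl | hq2
      · simp [s5, s6, Pi.single_apply]
      · simp [s5, s6, Pi.single_apply, hq1, hq2, hz q hq1 hq2]
    rw [hrep]
    exact Submodule.add_mem _
      (Submodule.smul_mem _ _ (Submodule.subset_span (Set.mem_insert _ _)))
      (Submodule.smul_mem _ _ (Submodule.subset_span (Set.mem_insert_of_mem _ rfl)))
  · rw [Submodule.span_le]
    intro x hx
    simp only [Set.mem_insert_iff, Set.mem_singleton_iff] at hx
    rcases hx with rfl | rfl
    · exact single_mem (dC5 B J)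
    · exact single_mem (dC6 B J)

lemma finrank_span2 :
    Module.finrank ℂ (Submodule.span ℂ {s5, s6}) = 2 := by
  have hli : LinearIndependent ℂ ![s5, s6] := by
    rw [LinearIndependent.pair_iff]
    intro s t hst
    have h1 := congrFun hst (1,0,1)
    have h2 := congrFun hst (1,1,0)
    simp only [s5, s6, Pi.add_apply, Pi.smul_apply, Pi.single_apply, smul_eq_mul,
      Pi.zero_apply] at h1 h2
    norm_num at h1 h2
    exact ⟨h1, h2⟩
  have hr : ({s5, s6} : Set (Idx → ℂ)) = Set.range ![s5, s6] :=
    (Matrix.range_cons_cons_empty _ _ _).symm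
  rw [hr, finrank_span_eq_card hli, Fintype.card_fin]

/-- For `0 < B < 2J`, the smallest eigenvalue of the three-qubit XX Hamiltonian is
`−2J − B/2` (every eigenvalue is real and at least `−2J − B/2`, and `−2J − B/2` is an
eigenvalue), and its eigenspace is two-dimensional. -/
theorem XXHamiltonian_ground_space_of_small_field (B J : ℝ) (hB : 0 < B) (hBJ : B < 2 * J) :
    (∀ μ : ℂ, Module.End.HasEigenvalue (XXHamiltonian B J).mulVecLin μ →
      (-(2 * J) - B / 2 ≤ μ.re ∧ μ.im = 0)) ∧
    Module.End.HasEigenvalue (XXHamiltonian B J).mulVecLin ((-(2 * J) - B / 2 : ℝ) : ℂ) ∧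
    Module.finrank ℂ
      (Module.End.eigenspace (XXHamiltonian B J).mulVecLin ((-(2 * J) - B / 2 : ℝ) : ℂ)) = 2 := by
  have hJ : 0 < J := by linarith
  refine ⟨?_, ?_, ?_⟩
  · intro μ hμ
    have hD : Module.End.HasEigenvalue (DM B J).mulVecLin μ := (hasEig_iff B J μ).mp hμ
    rw [DM_eq] at hD
    obtain ⟨i, hi⟩ := diag_eigen hD
    rw [dC_eq] at hi
    refine ⟨?_, by rw [← hi]; exact Complex.ofReal_im _⟩
    rw [← hi, Complex.ofReal_re]
    obtain ⟨a,b,c⟩ := i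
    fin_cases a <;> fin_cases b <;> fin_cases c <;>
    · simp only [dRl, Matrix.cons_val_zero, Matrix.cons_val_one, Matrix.head_cons,
        Fin.mk_zero, Fin.mk_one, Fin.isValue]
      linarith
  · rw [hasEig_iff]
    exact Module.End.hasEigenvalue_of_hasEigenvector
      ⟨single_mem (dC5 B J), single5_ne⟩
  · rw [eig_eq, LinearEquiv.finrank_map_eq, eigsp B J hB hBJ, finrank_span2]
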